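/- Let F₁ be an invertible 3×3 matrix, let Q₁ = Q_π(v₁), Q₂ = Q_π(v₂) be 180° rotations about orthogonal unit axes v₁ ⊥ v₂, and define F₂ = Q₁F₁Q₁, F₃ = Q₂F₂Q₂, F₄ = Q₂F₁Q₂. If each consecutive pair (F₁,F₂), (F₂,F₃), (F₃,F₄), (F₄,F₁) is rank-one connected, i.e., there exist Rᵢ ∈ SO(3), aᵢ ≠ 0, unit nᵢ with R₁F₂ − F₁ = a₁⊗n₁, R₂F₃ − F₂ = a₂⊗n₂, R₃F₄ − F₃ = a₃⊗n₃, R₄F₁ − F₄ = a₄⊗n₄, then the rotations can be chosen so that R₁R₂R₃R₄ = I and the four normals n₁, n₂, n₃, n₄ are coplanar (all orthogonal to a common nonzero vector). -/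

import Mathlib

open Matrix

noncomputable section

abbrev M3 := Matrix (Fin 3) (Fin 3) ℝ
abbrev V3 := Fin 3 → ℝ

def IsRot (R : M3) : Prop := Rᵀ * R = 1 ∧ R.det = 1

def Qpi (v : V3) : M3 := (2 : ℝ) • vecMulVec v v - 1

/-! ### vecMulVec algebra -/

lemma mul_vecMulVec (M : M3) (a n : V3) : M * vecMulVec a n = vecMulVec (M *ᵥ a) n := by
  ext i j
  simp [mul_apply, vecMulVec_apply, mulVec, dotProduct, Finset.sum_mul, mul_assoc]

lemma vecMulVec_mul (a n : V3) (M : M3) : vecMulVec a n * M = vecMulVec a (Mᵀ *ᵥ n) := by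
  ext i j
  simp [mul_apply, vecMulVec_apply, mulVec, dotProduct, Finset.mul_sum, transpose_apply,
    mul_comm, mul_assoc, mul_left_comm]

lemma vecMulVec_mul_vecMulVec (a b c d : V3) :
    vecMulVec a b * vecMulVec c d = (b ⬝ᵥ c) • vecMulVec a d := by
  ext i j
  simp [mul_apply, vecMulVec_apply, dotProduct, Finset.sum_mul, Finset.mul_sum]
  ring_nf
  congr 1
  ext k
  ring

lemma vecMulVec_mulVec (a b x : V3) : vecMulVec a b *ᵥ x = (b ⬝ᵥ x) • a := by
  ext i
  simp [mulVec, vecMulVec_apply, dotProduct, Fin.sum_univ_three]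
  ring

lemma vecMulVec_transpose (a b : V3) : (vecMulVec a b)ᵀ = vecMulVec b a := by
  ext i j; simp [vecMulVec_apply, transpose_apply, mul_comm]

lemma vecMulVec_smul_left (t : ℝ) (a n : V3) : vecMulVec (t • a) n = t • vecMulVec a n := by
  ext i j; simp [vecMulVec_apply]; ring

lemma vecMulVec_smul_right (t : ℝ) (a n : V3) : vecMulVec a (t • n) = t • vecMulVec a n := by
  ext i j; simp [vecMulVec_apply]; ring

lemma vecMulVec_sub_left (a b n : V3) :
    vecMulVec (a - b) n = vecMulVec a n - vecMulVec b n := by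
  ext i j; simp [vecMulVec_apply]; ring

lemma vecMulVec_sub_right (a n m : V3) :
    vecMulVec a (n - m) = vecMulVec a n - vecMulVec a m := by
  ext i j; simp [vecMulVec_apply]; ring

lemma vecMulVec_neg_right (a n : V3) : vecMulVec a (-n) = -vecMulVec a n := by
  ext i j; simp [vecMulVec_apply]

lemma det_one_add_vecMulVec (a c : V3) : (1 + vecMulVec a c).det = 1 + c ⬝ᵥ a := by
  simp [det_fin_three, vecMulVec_apply, one_apply, dotProduct, Fin.sum_univ_three, Matrix.add_apply]
  ring

lemma mulVec_dot (M : M3) (x z : V3) : (M *ᵥ x) ⬝ᵥ z = x ⬝ᵥ (Mᵀ *ᵥ z) := by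
  simp [dotProduct, mulVec, transpose_apply, Fin.sum_univ_three]
  ring

lemma dot_self_pos {x : V3} (hx : x ≠ 0) : 0 < x ⬝ᵥ x := by
  have h0 : (0:ℝ) ≤ x ⬝ᵥ x := by
    simpa [dotProduct] using Finset.sum_nonneg fun i _ => mul_self_nonneg (x i)
  rcases h0.lt_or_eq with h | h
  · exact h
  · exact absurd (dotProduct_self_eq_zero.mp h.symm) hx

/-! ### The generalized 180° rotation `W v` about an (unnormalized) axis `v` -/

def W (v : V3) : M3 := ((2:ℝ)/(v ⬝ᵥ v)) • vecMulVec v v - 1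

lemma W_transpose (v : V3) : (W v)ᵀ = W v := by
  simp [W, transpose_sub, transpose_smul, vecMulVec_transpose]

lemma W_mul_self {v : V3} (hv : v ⬝ᵥ v ≠ 0) : W v * W v = 1 := by
  have h : ((2:ℝ)/(v ⬝ᵥ v)) * ((2:ℝ)/(v ⬝ᵥ v)) * (v ⬝ᵥ v) = 2 * ((2:ℝ)/(v ⬝ᵥ v)) := by
    rw [mul_assoc, div_mul_cancel₀ _ hv, mul_comm]
  simp only [W, sub_mul, mul_sub, smul_mul_smul_comm, vecMulVec_mul_vecMulVec,
    smul_smul, one_mul, mul_one]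
  rw [h, two_mul, add_smul]
  abel

lemma det_smul_vecMulVec_sub_one (c : ℝ) (v : V3) :
    ((c • vecMulVec v v - 1 : M3)).det = c * (v ⬝ᵥ v) - 1 := by
  simp [det_fin_three, vecMulVec_apply, one_apply, Matrix.sub_apply, Matrix.smul_apply, dotProduct,
    Fin.sum_univ_three]
  ring

lemma W_det {v : V3} (hv : v ⬝ᵥ v ≠ 0) : (W v).det = 1 := by
  rw [W, det_smul_vecMulVec_sub_one, div_mul_cancel₀ _ hv]
  norm_num

lemma W_isRot {v : V3} (hv : v ⬝ᵥ v ≠ 0) : IsRot (W v) :=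
  ⟨by rw [W_transpose, W_mul_self hv], W_det hv⟩

lemma conj_W {Q : M3} (hs : Qᵀ = Q) (hQ : Q * Q = 1) (v : V3) :
    Q * W v * Q = W (Q *ᵥ v) := by
  have hdot : (Q *ᵥ v) ⬝ᵥ (Q *ᵥ v) = v ⬝ᵥ v := by
    rw [mulVec_dot, hs, mulVec_mulVec, hQ, one_mulVec]
  have hvv : Q * vecMulVec v v * Q = vecMulVec (Q *ᵥ v) (Q *ᵥ v) := by
    rw [mul_vecMulVec, vecMulVec_mul, hs]
  simp only [W, hdot, mul_sub, sub_mul, mul_smul_comm, smul_mul_assoc, one_mul, mul_one,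
    mul_assoc]
  rw [← mul_assoc Q (vecMulVec v v) Q] at *
  rw [hvv, hQ]

lemma Wprod {g h : V3} (hg : g ⬝ᵥ g ≠ 0) (hh : h ⬝ᵥ h ≠ 0) (hgh : g ⬝ᵥ h = 0) :
    (W g * W h) * (W g * W h) = 1 := by
  set cg : ℝ := (2:ℝ)/(g ⬝ᵥ g) with hcg
  set ch : ℝ := (2:ℝ)/(h ⬝ᵥ h) with hch
  set A : M3 := cg • vecMulVec g g with hA
  set B : M3 := ch • vecMulVec h h with hB
  have hAB : A * B = 0 := by
    rw [hA, hB, smul_mul_smul_comm, vecMulVec_mul_vecMulVec, hgh]; simp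
  have hBA : B * A = 0 := by
    rw [hA, hB, smul_mul_smul_comm, vecMulVec_mul_vecMulVec, dotProduct_comm, hgh]; simp
  have hAA : A * A = (2:ℝ) • A := by
    rw [hA, smul_mul_smul_comm, vecMulVec_mul_vecMulVec, smul_smul, smul_smul]
    congr 1
    rw [hcg, mul_assoc, div_mul_cancel₀ _ hg, mul_comm]
  have hBB : B * B = (2:ℝ) • B := by
    rw [hB, smul_mul_smul_comm, vecMulVec_mul_vecMulVec, smul_smul, smul_smul]
    congr 1
    rw [hch, mul_assoc, div_mul_cancel₀ _ hh, mul_comm]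
  have hW : W g * W h = 1 - A - B := by
    simp only [W, ← hcg, ← hch, ← hA, ← hB, sub_mul, mul_sub, one_mul, mul_one, hAB]
    abel
  rw [hW]
  simp only [sub_mul, mul_sub, one_mul, mul_one, hAA, hBB, hAB, hBA]
  abel_nf
  simp [two_smul]
  abel

/-! ### Qpi basic lemmas -/

lemma Qpi_transpose (v : V3) : (Qpi v)ᵀ = Qpi v := by
  simp [Qpi, transpose_sub, transpose_smul, vecMulVec_transpose]

lemma Qpi_mul_self {v : V3} (hv : v ⬝ᵥ v = 1) : Qpi v * Qpi v = 1 := by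
  simp only [Qpi, sub_mul, mul_sub, smul_mul_smul_comm, vecMulVec_mul_vecMulVec, hv,
    one_smul, smul_smul, mul_one, one_mul]
  module

lemma Qpi_det {v : V3} (hv : v ⬝ᵥ v = 1) : (Qpi v).det = 1 := by
  have : (Qpi v).det = 2 * (v ⬝ᵥ v) - 1 := by
    rw [Qpi, det_smul_vecMulVec_sub_one]
  rw [this, hv]; norm_num

lemma Qpi_isRot {v : V3} (hv : v ⬝ᵥ v = 1) : IsRot (Qpi v) :=
  ⟨by rw [Qpi_transpose, Qpi_mul_self hv], Qpi_det hv⟩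

lemma Qpi_mulVec (v x : V3) : Qpi v *ᵥ x = (2 * (v ⬝ᵥ x)) • v - x := by
  simp [Qpi, sub_mulVec, smul_mulVec, _root_.vecMulVec_mulVec, smul_smul]

/-! ### Rotations -/

lemma IsRot.mul {A B : M3} (hA : IsRot A) (hB : IsRot B) : IsRot (A * B) := by
  refine ⟨?_, by rw [det_mul, hA.2, hB.2, one_mul]⟩
  rw [transpose_mul, Matrix.mul_assoc, ← Matrix.mul_assoc Aᵀ A B, hA.1, Matrix.one_mul, hB.1]

lemma IsRot.mul_transpose_self {A : M3} (hA : IsRot A) : A * Aᵀ = 1 :=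
  mul_eq_one_comm.mp hA.1

lemma IsRot.transpose {A : M3} (hA : IsRot A) : IsRot Aᵀ := by
  refine ⟨?_, by rw [det_transpose, hA.2]⟩
  rw [transpose_transpose]
  exact hA.mul_transpose_self

/-- Conjugating a symmetric matrix with eigenvector `v` by `Qpi v` leaves it unchanged. -/
lemma conj_eig {v : V3} (hv : v ⬝ᵥ v = 1) {C : M3} (hCs : Cᵀ = C) {μ : ℝ}
    (hCv : C *ᵥ v = μ • v) : Qpi v * C * Qpi v = C := by
  have h1 : C * vecMulVec v v = μ • vecMulVec v v := by
    rw [mul_vecMulVec, hCv, vecMulVec_smul_left]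
  have h2 : vecMulVec v v * C = μ • vecMulVec v v := by
    rw [vecMulVec_mul, hCs, hCv, vecMulVec_smul_right]
  have h3 : vecMulVec v v * C * vecMulVec v v = μ • vecMulVec v v := by
    rw [h2, smul_mul_assoc, vecMulVec_mul_vecMulVec, hv, one_smul]
  simp only [Qpi, sub_mul, mul_sub, one_mul, mul_one, smul_mul_assoc, mul_smul_comm]
  rw [h3, h1, h2]
  module

/-- A rotation cannot differ from the identity by a nonzero rank-one matrix; hence if
`GᵀG = FᵀF` and `det G = det F`, there is no rank-one connection between `F` and `G`. -/
lemma no_rank_one (F G : M3) (hF : IsUnit F.det) (hdet : G.det = F.det)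
    (hC : Gᵀ * G = Fᵀ * F) :
    ¬ ∃ (R : M3) (a n : V3), IsRot R ∧ a ≠ 0 ∧ n ⬝ᵥ n = 1 ∧ R * G - F = vecMulVec a n := by
  rintro ⟨R, a, n, ⟨hRo, hRd⟩, ha, hn, heq⟩
  have hFd : F.det ≠ 0 := by simpa [isUnit_iff_ne_zero] using hF
  have hRG : R * G = F + vecMulVec a n := by linear_combination (norm := abel) heq
  set c : V3 := F⁻¹ᵀ *ᵥ n with hc
  have hcne : c ≠ 0 := by
    intro h0
    have hnn : n = Fᵀ *ᵥ c := by
      rw [hc, mulVec_mulVec, ← transpose_mul, F.nonsing_inv_mul hF, transpose_one, one_mulVec]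
    rw [h0, mulVec_zero] at hnn
    rw [hnn] at hn
    simp at hn
  have hU : R * G * F⁻¹ = 1 + vecMulVec a c := by
    rw [hRG, add_mul, F.mul_nonsing_inv hF, vecMulVec_mul]
  have hdetU : (R * G * F⁻¹).det = 1 := by
    rw [det_mul, det_mul, hRd, hdet, one_mul, F.det_nonsing_inv, Ring.inverse_eq_inv,
      mul_inv_cancel₀ hFd]
  have hca : c ⬝ᵥ a = 0 := by
    rw [hU, det_one_add_vecMulVec] at hdetU
    linarith
  have hUo : (R * G * F⁻¹)ᵀ * (R * G * F⁻¹) = 1 := by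
    have h1 : (R * G * F⁻¹)ᵀ * (R * G * F⁻¹) = F⁻¹ᵀ * ((Gᵀ * (Rᵀ * R) * G) * F⁻¹) := by
      simp only [transpose_mul]
      simp [Matrix.mul_assoc]
    rw [h1, hRo, Matrix.mul_one, hC]
    calc F⁻¹ᵀ * (Fᵀ * F * F⁻¹) = (F * F⁻¹)ᵀ * (F * F⁻¹) := by
          simp only [transpose_mul, Matrix.mul_assoc]
      _ = 1 := by rw [F.mul_nonsing_inv hF]; simp
  rw [hU] at hUo
  have hM : vecMulVec c a + vecMulVec a c + (a ⬝ᵥ a) • vecMulVec c c = 0 := by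
    have hexp : (1 + vecMulVec a c)ᵀ * (1 + vecMulVec a c)
        = 1 + (vecMulVec c a + vecMulVec a c + (a ⬝ᵥ a) • vecMulVec c c) := by
      rw [transpose_add, transpose_one, vecMulVec_transpose, add_mul, mul_add, mul_add,
        Matrix.one_mul, Matrix.mul_one, vecMulVec_mul_vecMulVec]
      simp only [Matrix.one_mul, Matrix.mul_one]
      abel
    rw [hexp] at hUo
    have := hUo
    calc vecMulVec c a + vecMulVec a c + (a ⬝ᵥ a) • vecMulVec c c
        = (1 + (vecMulVec c a + vecMulVec a c + (a ⬝ᵥ a) • vecMulVec c c)) - 1 := by abel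
      _ = 0 := by rw [this]; abel
  have haa : (a ⬝ᵥ a) • c = 0 := by
    have h1 : (vecMulVec c a + vecMulVec a c + (a ⬝ᵥ a) • vecMulVec c c) *ᵥ a
        = (a ⬝ᵥ a) • c := by
      rw [add_mulVec, add_mulVec, smul_mulVec, _root_.vecMulVec_mulVec, _root_.vecMulVec_mulVec,
        _root_.vecMulVec_mulVec, hca]
      simp [smul_smul]
    rw [hM, zero_mulVec] at h1
    exact h1.symm
  rcases smul_eq_zero.mp haa with h | h
  · exact ha (dotProduct_self_eq_zero.mp h)
  · exact hcne h
lemma vecMulVec_neg_left (a n : V3) : vecMulVec (-a) n = -vecMulVec a n := by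
  ext i j; simp [vecMulVec_apply]

lemma Qpi_neg (v : V3) : Qpi (-v) = Qpi v := by
  unfold Qpi
  congr 1
  ext i j
  simp [vecMulVec_apply]

lemma conj_Qpi {Q : M3} (hs : Qᵀ = Q) (hQ : Q * Q = 1) (w : V3) :
    Q * Qpi w * Q = Qpi (Q *ᵥ w) := by
  have hvv : Q * vecMulVec w w * Q = vecMulVec (Q *ᵥ w) (Q *ᵥ w) := by
    rw [mul_vecMulVec, vecMulVec_mul, hs]
  simp only [Qpi, mul_sub, sub_mul, mul_smul_comm, smul_mul_assoc, one_mul, mul_one, mul_assoc]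
  rw [← mul_assoc Q (vecMulVec w w) Q] at *
  rw [hvv, hQ]

/-- Crossing-twin compatibility (Bhattacharya et al., Theorem 2). -/
theorem crossing_twin_compatibility
    (F₁ : M3) (hF₁ : IsUnit F₁.det)
    (v₁ v₂ : V3) (hv₁ : v₁ ⬝ᵥ v₁ = 1) (hv₂ : v₂ ⬝ᵥ v₂ = 1) (hv : v₁ ⬝ᵥ v₂ = 0)
    (F₂ F₃ F₄ : M3)
    (hF₂ : F₂ = Qpi v₁ * F₁ * Qpi v₁)
    (hF₃ : F₃ = Qpi v₂ * F₂ * Qpi v₂)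
    (hF₄ : F₄ = Qpi v₂ * F₁ * Qpi v₂)
    (h₁ : ∃ (R : M3) (a n : V3), IsRot R ∧ a ≠ 0 ∧ n ⬝ᵥ n = 1 ∧ R * F₂ - F₁ = vecMulVec a n)
    (h₂ : ∃ (R : M3) (a n : V3), IsRot R ∧ a ≠ 0 ∧ n ⬝ᵥ n = 1 ∧ R * F₃ - F₂ = vecMulVec a n)
    (h₃ : ∃ (R : M3) (a n : V3), IsRot R ∧ a ≠ 0 ∧ n ⬝ᵥ n = 1 ∧ R * F₄ - F₃ = vecMulVec a n)
    (h₄ : ∃ (R : M3) (a n : V3), IsRot R ∧ a ≠ 0 ∧ n ⬝ᵥ n = 1 ∧ R * F₁ - F₄ = vecMulVec a n) :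
    ∃ (R₁ R₂ R₃ R₄ : M3) (a₁ a₂ a₃ a₄ n₁ n₂ n₃ n₄ : V3),
      IsRot R₁ ∧ IsRot R₂ ∧ IsRot R₃ ∧ IsRot R₄ ∧
      a₁ ≠ 0 ∧ a₂ ≠ 0 ∧ a₃ ≠ 0 ∧ a₄ ≠ 0 ∧
      n₁ ⬝ᵥ n₁ = 1 ∧ n₂ ⬝ᵥ n₂ = 1 ∧ n₃ ⬝ᵥ n₃ = 1 ∧ n₄ ⬝ᵥ n₄ = 1 ∧
      R₁ * F₂ - F₁ = vecMulVec a₁ n₁ ∧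
      R₂ * F₃ - F₂ = vecMulVec a₂ n₂ ∧
      R₃ * F₄ - F₃ = vecMulVec a₃ n₃ ∧
      R₄ * F₁ - F₄ = vecMulVec a₄ n₄ ∧
      R₁ * R₂ * R₃ * R₄ = 1 ∧
      ∃ w : V3, w ≠ 0 ∧ n₁ ⬝ᵥ w = 0 ∧ n₂ ⬝ᵥ w = 0 ∧ n₃ ⬝ᵥ w = 0 ∧ n₄ ⬝ᵥ w = 0 := by
  clear h₃ h₄
  -- basic facts about the two 180° rotations
  have hv21 : v₂ ⬝ᵥ v₁ = 0 := by rwa [dotProduct_comm]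
  have hQ1s : (Qpi v₁)ᵀ = Qpi v₁ := Qpi_transpose v₁
  have hQ2s : (Qpi v₂)ᵀ = Qpi v₂ := Qpi_transpose v₂
  have hQ1sq : Qpi v₁ * Qpi v₁ = 1 := Qpi_mul_self hv₁
  have hQ2sq : Qpi v₂ * Qpi v₂ = 1 := Qpi_mul_self hv₂
  have hQ1rot : IsRot (Qpi v₁) := Qpi_isRot hv₁
  have hQ2rot : IsRot (Qpi v₂) := Qpi_isRot hv₂
  have hQ1cL : ∀ X : M3, Qpi v₁ * (Qpi v₁ * X) = X := fun X => by
    rw [← Matrix.mul_assoc, hQ1sq, Matrix.one_mul]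
  have hQ2cL : ∀ X : M3, Qpi v₂ * (Qpi v₂ * X) = X := fun X => by
    rw [← Matrix.mul_assoc, hQ2sq, Matrix.one_mul]
  have hQ1v1 : Qpi v₁ *ᵥ v₁ = v₁ := by
    rw [Qpi_mulVec, hv₁]; module
  have hQ1v2 : Qpi v₁ *ᵥ v₂ = -v₂ := by
    rw [Qpi_mulVec, hv]; module
  have hQ2v2 : Qpi v₂ *ᵥ v₂ = v₂ := by
    rw [Qpi_mulVec, hv₂]; module
  have hQ2v1 : Qpi v₂ *ᵥ v₁ = -v₁ := by
    rw [Qpi_mulVec, hv21]; module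
  have hQ212 : Qpi v₂ * Qpi v₁ * Qpi v₂ = Qpi v₁ := by
    rw [conj_Qpi hQ2s hQ2sq v₁, hQ2v1, Qpi_neg]
  have hQ121 : Qpi v₁ * Qpi v₂ * Qpi v₁ = Qpi v₂ := by
    rw [conj_Qpi hQ1s hQ1sq v₂, hQ1v2, Qpi_neg]
  have hQ212L : ∀ X : M3, Qpi v₂ * (Qpi v₁ * (Qpi v₂ * X)) = Qpi v₁ * X := fun X => by
    rw [← Matrix.mul_assoc, ← Matrix.mul_assoc, hQ212]
  have hQ121L : ∀ X : M3, Qpi v₁ * (Qpi v₂ * (Qpi v₁ * X)) = Qpi v₂ * X := fun X => by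
    rw [← Matrix.mul_assoc, ← Matrix.mul_assoc, hQ121]
  -- determinants
  have hdF₂ : F₂.det = F₁.det := by
    rw [hF₂, det_mul, det_mul, Qpi_det hv₁]; ring
  have hdF₃ : F₃.det = F₂.det := by
    rw [hF₃, det_mul, det_mul, Qpi_det hv₂]; ring
  have hF₂u : IsUnit F₂.det := by rw [hdF₂]; exact hF₁
  -- interface 1 quantities
  obtain ⟨g, hgdef⟩ : ∃ g : V3, g = F₁⁻¹ᵀ *ᵥ v₁ := ⟨_, rfl⟩
  have hFtg : F₁ᵀ *ᵥ g = v₁ := by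
    rw [hgdef, mulVec_mulVec, ← transpose_mul, F₁.nonsing_inv_mul hF₁, transpose_one, one_mulVec]
  have hgne : g ≠ 0 := by
    intro h0
    rw [h0, mulVec_zero] at hFtg
    rw [← hFtg] at hv₁
    simp at hv₁
  have hgg : g ⬝ᵥ g ≠ 0 := ne_of_gt (dot_self_pos hgne)
  obtain ⟨a₁, ha₁def⟩ : ∃ a₁ : V3, a₁ = ((2:ℝ)/(g ⬝ᵥ g)) • g - (2:ℝ) • (F₁ *ᵥ v₁) := ⟨_, rfl⟩
  -- the twinning equation at interface 1
  have hWgF₁ : W g * F₁ = ((2:ℝ)/(g ⬝ᵥ g)) • vecMulVec g v₁ - F₁ := by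
    rw [W, sub_mul, smul_mul_assoc, vecMulVec_mul, hFtg, Matrix.one_mul]
  have hF₁Q1 : F₁ * Qpi v₁ = (2:ℝ) • vecMulVec (F₁ *ᵥ v₁) v₁ - F₁ := by
    rw [Qpi, mul_sub, mul_smul_comm, mul_vecMulVec, Matrix.mul_one]
  have heq1 : (W g * Qpi v₁) * F₂ - F₁ = vecMulVec a₁ v₁ := by
    have h1 : (W g * Qpi v₁) * F₂ = (W g * F₁) * Qpi v₁ := by
      rw [hF₂]
      simp only [Matrix.mul_assoc]
      rw [hQ1cL (F₁ * Qpi v₁)]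
    rw [h1, hWgF₁, sub_mul, smul_mul_assoc, vecMulVec_mul, hQ1s, hQ1v1, hF₁Q1, ha₁def,
      vecMulVec_sub_left, vecMulVec_smul_left, vecMulVec_smul_left]
    abel
  -- degenerate case at interface 1 is impossible
  by_cases ha1 : a₁ = 0
  · exfalso
    rw [ha₁def] at ha1
    have hFv : F₁ *ᵥ v₁ = ((1:ℝ)/(g ⬝ᵥ g)) • g := by
      have h2 : ((2:ℝ)/(g ⬝ᵥ g)) • g = (2:ℝ) • (F₁ *ᵥ v₁) := sub_eq_zero.mp ha1
      have h3 := congrArg (fun z => ((1:ℝ)/2) • z) h2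
      simp only [smul_smul] at h3
      have e1 : (1:ℝ)/2 * ((2:ℝ)/(g ⬝ᵥ g)) = (1:ℝ)/(g ⬝ᵥ g) := by ring
      have e2 : (1:ℝ)/2 * (2:ℝ) = 1 := by norm_num
      rw [e1, e2, one_smul] at h3
      exact h3.symm
    have hCv : (F₁ᵀ * F₁) *ᵥ v₁ = ((1:ℝ)/(g ⬝ᵥ g)) • v₁ := by
      rw [← mulVec_mulVec, hFv, mulVec_smul, hFtg]
    have hCs : (F₁ᵀ * F₁)ᵀ = F₁ᵀ * F₁ := by
      rw [transpose_mul, transpose_transpose]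
    have hCC : F₂ᵀ * F₂ = F₁ᵀ * F₁ := by
      rw [hF₂]
      have h4 : (Qpi v₁ * F₁ * Qpi v₁)ᵀ * (Qpi v₁ * F₁ * Qpi v₁)
          = Qpi v₁ * (F₁ᵀ * F₁) * Qpi v₁ := by
        simp only [transpose_mul, hQ1s]
        simp only [Matrix.mul_assoc]
        rw [hQ1cL (F₁ * Qpi v₁)]
      rw [h4, conj_eig hv₁ hCs hCv]
    exact no_rank_one F₁ F₂ hF₁ hdF₂ hCC h₁
  -- interface 2 quantities
  obtain ⟨p, hpdef⟩ : ∃ p : V3, p = F₂ *ᵥ v₂ := ⟨_, rfl⟩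
  have hpne : p ≠ 0 := by
    intro h0
    have hb : F₂⁻¹ *ᵥ p = v₂ := by
      rw [hpdef, mulVec_mulVec, F₂.nonsing_inv_mul hF₂u, one_mulVec]
    rw [h0, mulVec_zero] at hb
    rw [← hb] at hv₂
    simp at hv₂
  have hpp : p ⬝ᵥ p ≠ 0 := ne_of_gt (dot_self_pos hpne)
  obtain ⟨x₂, hx₂def⟩ : ∃ x₂ : V3, x₂ = F₂ᵀ *ᵥ p := ⟨_, rfl⟩
  obtain ⟨k, hkdef⟩ : ∃ k : V3, k = ((2:ℝ)/(p ⬝ᵥ p)) • (Qpi v₂ *ᵥ x₂) - (2:ℝ) • v₂ := ⟨_, rfl⟩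
  have hx₂v₂ : x₂ ⬝ᵥ v₂ = p ⬝ᵥ p := by
    rw [hx₂def, mulVec_dot, transpose_transpose, ← hpdef]
  have hkv₂ : k ⬝ᵥ v₂ = 0 := by
    rw [hkdef, sub_dotProduct, smul_dotProduct, smul_dotProduct, mulVec_dot, hQ2s, hQ2v2,
      hx₂v₂, hv₂, smul_eq_mul, smul_eq_mul, div_mul_cancel₀ _ hpp]
    norm_num
  have hWpF₂ : W p * F₂ = ((2:ℝ)/(p ⬝ᵥ p)) • vecMulVec p x₂ - F₂ := by
    rw [W, sub_mul, smul_mul_assoc, vecMulVec_mul, ← hx₂def, Matrix.one_mul]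
  have hF₂Q2 : F₂ * Qpi v₂ = (2:ℝ) • vecMulVec p v₂ - F₂ := by
    rw [Qpi, mul_sub, mul_smul_comm, mul_vecMulVec, Matrix.mul_one, ← hpdef]
  have heq2 : (W p * Qpi v₂) * F₃ - F₂ = vecMulVec p k := by
    have h1 : (W p * Qpi v₂) * F₃ = (W p * F₂) * Qpi v₂ := by
      rw [hF₃]
      simp only [Matrix.mul_assoc]
      rw [hQ2cL (F₂ * Qpi v₂)]
    rw [h1, hWpF₂, sub_mul, smul_mul_assoc, vecMulVec_mul, hQ2s, hF₂Q2, hkdef,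
      vecMulVec_sub_right, vecMulVec_smul_right, vecMulVec_smul_right]
    abel
  -- degenerate case at interface 2 is impossible
  by_cases hk0 : k = 0
  · exfalso
    rw [hkdef] at hk0
    have h2 : ((2:ℝ)/(p ⬝ᵥ p)) • (Qpi v₂ *ᵥ x₂) = (2:ℝ) • v₂ := sub_eq_zero.mp hk0
    have h3 : Qpi v₂ *ᵥ x₂ = (p ⬝ᵥ p) • v₂ := by
      have h4 : ((p ⬝ᵥ p)/2) • (((2:ℝ)/(p ⬝ᵥ p)) • (Qpi v₂ *ᵥ x₂))
          = ((p ⬝ᵥ p)/2) • ((2:ℝ) • v₂) := by rw [h2]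
      rw [smul_smul, smul_smul] at h4
      have hc1 : (p ⬝ᵥ p)/2 * ((2:ℝ)/(p ⬝ᵥ p)) = 1 := by
        rw [div_mul_div_comm, mul_comm, div_self (mul_ne_zero (two_ne_zero) hpp)]
      have hc2 : (p ⬝ᵥ p)/2 * (2:ℝ) = p ⬝ᵥ p := div_mul_cancel₀ _ (two_ne_zero)
      rwa [hc1, hc2, one_smul] at h4
    have hx₂v : x₂ = (p ⬝ᵥ p) • v₂ := by
      have h5 : Qpi v₂ *ᵥ (Qpi v₂ *ᵥ x₂) = x₂ := by
        rw [mulVec_mulVec, hQ2sq, one_mulVec]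
      rw [← h5, h3, mulVec_smul, hQ2v2]
    have hCv : (F₂ᵀ * F₂) *ᵥ v₂ = (p ⬝ᵥ p) • v₂ := by
      rw [← mulVec_mulVec, ← hpdef, ← hx₂def]
      exact hx₂v
    have hCs : (F₂ᵀ * F₂)ᵀ = F₂ᵀ * F₂ := by rw [transpose_mul, transpose_transpose]
    have hCC : F₃ᵀ * F₃ = F₂ᵀ * F₂ := by
      rw [hF₃]
      have h4 : (Qpi v₂ * F₂ * Qpi v₂)ᵀ * (Qpi v₂ * F₂ * Qpi v₂)
          = Qpi v₂ * (F₂ᵀ * F₂) * Qpi v₂ := by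
        simp only [transpose_mul, hQ2s]
        simp only [Matrix.mul_assoc]
        rw [hQ2cL (F₂ * Qpi v₂)]
      rw [h4, conj_eig hv₂ hCs hCv]
    exact no_rank_one F₂ F₃ hF₂u hdF₃ hCC h₂
  -- normalization for interface 2
  have hkk : 0 < k ⬝ᵥ k := dot_self_pos hk0
  obtain ⟨t, htdef⟩ : ∃ t : ℝ, t = Real.sqrt (k ⬝ᵥ k) := ⟨_, rfl⟩
  have htpos : 0 < t := by rw [htdef]; exact Real.sqrt_pos.mpr hkk
  have htne : t ≠ 0 := ne_of_gt htpos
  have ht2 : t * t = k ⬝ᵥ k := by rw [htdef]; exact Real.mul_self_sqrt (le_of_lt hkk)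
  obtain ⟨n₂, hn₂def⟩ : ∃ n₂ : V3, n₂ = t⁻¹ • k := ⟨_, rfl⟩
  obtain ⟨a₂, ha₂def⟩ : ∃ a₂ : V3, a₂ = t • p := ⟨_, rfl⟩
  have hn₂n₂ : n₂ ⬝ᵥ n₂ = 1 := by
    rw [hn₂def, smul_dotProduct, dotProduct_smul, smul_eq_mul, smul_eq_mul, ← ht2]
    field_simp
  have ha₂ne : a₂ ≠ 0 := by rw [ha₂def]; exact smul_ne_zero htne hpne
  have hvmv₂ : vecMulVec a₂ n₂ = vecMulVec p k := by
    rw [ha₂def, hn₂def, vecMulVec_smul_left, vecMulVec_smul_right, smul_smul,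
      mul_inv_cancel₀ htne, one_smul]
  have hn₂v₂ : n₂ ⬝ᵥ v₂ = 0 := by
    rw [hn₂def, smul_dotProduct, hkv₂, smul_eq_mul, mul_zero]
  -- the four rotations
  obtain ⟨R₁, hR₁def⟩ : ∃ R₁ : M3, R₁ = W g * Qpi v₁ := ⟨_, rfl⟩
  obtain ⟨R₂, hR₂def⟩ : ∃ R₂ : M3, R₂ = W p * Qpi v₂ := ⟨_, rfl⟩
  have hR₁rot : IsRot R₁ := by rw [hR₁def]; exact (W_isRot hgg).mul hQ1rot
  have hR₂rot : IsRot R₂ := by rw [hR₂def]; exact (W_isRot hpp).mul hQ2rot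
  rw [← hR₁def] at heq1
  rw [← hR₂def] at heq2
  obtain ⟨R₃, hR₃def⟩ : ∃ R₃ : M3, R₃ = Qpi v₂ * R₁ᵀ * Qpi v₂ := ⟨_, rfl⟩
  obtain ⟨R₄, hR₄def⟩ : ∃ R₄ : M3, R₄ = Qpi v₁ * R₂ᵀ * Qpi v₁ := ⟨_, rfl⟩
  have hR₃rot : IsRot R₃ := by rw [hR₃def]; exact (hQ2rot.mul hR₁rot.transpose).mul hQ2rot
  have hR₄rot : IsRot R₄ := by rw [hR₄def]; exact (hQ1rot.mul hR₂rot.transpose).mul hQ1rot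
  -- interface 3
  obtain ⟨a₃, ha₃def⟩ : ∃ a₃ : V3, a₃ = Qpi v₂ *ᵥ (R₁ᵀ *ᵥ a₁) := ⟨_, rfl⟩
  have ha₃ne : a₃ ≠ 0 := by
    rw [ha₃def]
    intro h0
    have h1 : R₁ᵀ *ᵥ a₁ = 0 := by
      have h2 := congrArg (fun z => Qpi v₂ *ᵥ z) h0
      simpa [mulVec_mulVec, ← Matrix.mul_assoc, hQ2sq] using h2
    have h2 : a₁ = 0 := by
      have h3 := congrArg (fun z => R₁ *ᵥ z) h1
      simpa [mulVec_mulVec, ← Matrix.mul_assoc, hR₁rot.mul_transpose_self] using h3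
    exact ha1 h2
  have hR₁tF₁ : R₁ᵀ * F₁ = F₂ - vecMulVec (R₁ᵀ *ᵥ a₁) v₁ := by
    have e' : F₁ = R₁ * F₂ - vecMulVec a₁ v₁ := by
      rw [← heq1]; abel
    rw [e', mul_sub, ← Matrix.mul_assoc, hR₁rot.1, Matrix.one_mul, mul_vecMulVec]
  have heq3 : R₃ * F₄ - F₃ = vecMulVec a₃ v₁ := by
    have h1 : R₃ * F₄ = Qpi v₂ * (R₁ᵀ * F₁) * Qpi v₂ := by
      rw [hR₃def, hF₄]
      simp only [Matrix.mul_assoc]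
      rw [hQ2cL (F₁ * Qpi v₂)]
    have h2 : Qpi v₂ * vecMulVec (R₁ᵀ *ᵥ a₁) v₁ * Qpi v₂ = -vecMulVec a₃ v₁ := by
      rw [mul_vecMulVec, vecMulVec_mul, hQ2s, hQ2v1, vecMulVec_neg_right, ha₃def]
    rw [h1, hR₁tF₁, mul_sub, sub_mul, h2, ← hF₃]
    abel
  -- interface 4
  obtain ⟨n₄, hn₄def⟩ : ∃ n₄ : V3, n₄ = Qpi v₁ *ᵥ n₂ := ⟨_, rfl⟩
  obtain ⟨a₄, ha₄def⟩ : ∃ a₄ : V3, a₄ = -(Qpi v₁ *ᵥ (R₂ᵀ *ᵥ a₂)) := ⟨_, rfl⟩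
  have ha₄ne : a₄ ≠ 0 := by
    rw [ha₄def, neg_ne_zero]
    intro h0
    have h1 : R₂ᵀ *ᵥ a₂ = 0 := by
      have h2 := congrArg (fun z => Qpi v₁ *ᵥ z) h0
      simpa [mulVec_mulVec, ← Matrix.mul_assoc, hQ1sq] using h2
    have h2 : a₂ = 0 := by
      have h3 := congrArg (fun z => R₂ *ᵥ z) h1
      simpa [mulVec_mulVec, ← Matrix.mul_assoc, hR₂rot.mul_transpose_self] using h3
    exact ha₂ne h2
  have hn₄n₄ : n₄ ⬝ᵥ n₄ = 1 := by
    rw [hn₄def, mulVec_dot, hQ1s, mulVec_mulVec, hQ1sq, one_mulVec, hn₂n₂]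
  have hn₄v₂ : n₄ ⬝ᵥ v₂ = 0 := by
    rw [hn₄def, mulVec_dot, hQ1s, hQ1v2, dotProduct_neg, hn₂v₂, neg_zero]
  have hF₁eq : Qpi v₁ * F₂ * Qpi v₁ = F₁ := by
    rw [hF₂]
    simp only [Matrix.mul_assoc]
    rw [hQ1sq, Matrix.mul_one, hQ1cL F₁]
  have hQ1F₃Q1 : Qpi v₁ * F₃ * Qpi v₁ = F₄ := by
    rw [hF₃, hF₂, hF₄]
    simp only [Matrix.mul_assoc]
    rw [hQ121L (F₁ * (Qpi v₁ * (Qpi v₂ * Qpi v₁)))]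
    rw [show Qpi v₁ * (Qpi v₂ * Qpi v₁) = Qpi v₂ from by rw [← Matrix.mul_assoc, hQ121]]
  have hR₂tF₂ : R₂ᵀ * F₂ = F₃ - vecMulVec (R₂ᵀ *ᵥ a₂) n₂ := by
    have e' : F₂ = R₂ * F₃ - vecMulVec a₂ n₂ := by
      rw [hvmv₂, ← heq2]; abel
    rw [e', mul_sub, ← Matrix.mul_assoc, hR₂rot.1, Matrix.one_mul, mul_vecMulVec]
  have heq4 : R₄ * F₁ - F₄ = vecMulVec a₄ n₄ := by
    have h1 : R₄ * F₁ = Qpi v₁ * (R₂ᵀ * F₂) * Qpi v₁ := by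
      rw [hR₄def, ← hF₁eq]
      simp only [Matrix.mul_assoc]
      rw [hQ1cL (F₂ * Qpi v₁)]
    have h2 : Qpi v₁ * vecMulVec (R₂ᵀ *ᵥ a₂) n₂ * Qpi v₁
        = vecMulVec (Qpi v₁ *ᵥ (R₂ᵀ *ᵥ a₂)) n₄ := by
      rw [mul_vecMulVec, vecMulVec_mul, hQ1s, hn₄def]
    have h3 : Qpi v₁ * (F₃ - vecMulVec (R₂ᵀ *ᵥ a₂) n₂) * Qpi v₁
        = F₄ - vecMulVec (Qpi v₁ *ᵥ (R₂ᵀ *ᵥ a₂)) n₄ := by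
      rw [mul_sub, sub_mul, h2, hQ1F₃Q1]
    rw [h1, hR₂tF₂, h3, ha₄def, vecMulVec_neg_left]
    abel
  -- the product of the four rotations is the identity
  obtain ⟨y, hydef⟩ : ∃ y : V3, y = Qpi v₁ *ᵥ p := ⟨_, rfl⟩
  have hY : Qpi v₁ * W p * Qpi v₁ = W y := by
    rw [hydef]; exact conj_W hQ1s hQ1sq p
  have hyy : y ⬝ᵥ y ≠ 0 := by
    rw [hydef, mulVec_dot, hQ1s, mulVec_mulVec, hQ1sq, one_mulVec]
    exact hpp
  have hgy : g ⬝ᵥ y = 0 := by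
    have hQ1F₂ : Qpi v₁ * F₂ = F₁ * Qpi v₁ := by
      rw [hF₂]
      simp only [Matrix.mul_assoc]
      rw [hQ1cL (F₁ * Qpi v₁)]
    have h1 : y = -(F₁ *ᵥ v₂) := by
      rw [hydef, hpdef, mulVec_mulVec, hQ1F₂, ← mulVec_mulVec, hQ1v2, mulVec_neg]
    have h2 : g ⬝ᵥ (F₁ *ᵥ v₂) = v₁ ⬝ᵥ v₂ := by
      have := mulVec_dot F₁ᵀ g v₂
      rw [transpose_transpose, hFtg] at this
      exact this.symm
    rw [h1, dotProduct_neg, h2, hv, neg_zero]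
  have hR₁t : R₁ᵀ = Qpi v₁ * W g := by
    rw [hR₁def, transpose_mul, hQ1s, W_transpose]
  have hR₂t : R₂ᵀ = Qpi v₂ * W p := by
    rw [hR₂def, transpose_mul, hQ2s, W_transpose]
  have hprod : R₁ * R₂ * R₃ * R₄ = 1 := by
    calc R₁ * R₂ * R₃ * R₄
        = (W g * (Qpi v₁ * W p * Qpi v₁)) * (W g * (Qpi v₁ * W p * Qpi v₁)) := by
          rw [hR₃def, hR₄def, hR₁t, hR₂t, hR₁def, hR₂def]
          simp only [Matrix.mul_assoc]
          rw [hQ2cL (Qpi v₁ * (W g * (Qpi v₂ * (Qpi v₁ * (Qpi v₂ * (W p * Qpi v₁))))))]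
          rw [hQ212L (W p * Qpi v₁)]
      _ = (W g * W y) * (W g * W y) := by rw [hY]
      _ = 1 := Wprod hgg hyy hgy
  -- assemble
  have heq2' : R₂ * F₃ - F₂ = vecMulVec a₂ n₂ := by rw [hvmv₂]; exact heq2
  have hwne : v₂ ≠ 0 := by
    intro h0
    rw [h0] at hv₂
    simp at hv₂
  exact ⟨R₁, R₂, R₃, R₄, a₁, a₂, a₃, a₄, v₁, n₂, v₁, n₄,
    hR₁rot, hR₂rot, hR₃rot, hR₄rot, ha1, ha₂ne, ha₃ne, ha₄ne,
    hv₁, hn₂n₂, hv₁, hn₄n₄,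
    heq1, heq2', heq3, heq4, hprod,
    v₂, hwne, hv, hn₂v₂, hv, hn₄v₂⟩
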